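/- Let d ≥ 1, let p, q, s, t ∈ ℝ satisfy p·t ≠ q·s, p² + q² ≠ s² + t², and q² ≠ t², and let r ∈ {1, −1}. Then there exists w ∈ ℝ such that every complex zero of the polynomial z ↦ (q + p·w + (p − q·w)·z)^d + r·(t + s·w + (s − t·w)·z)^d has strictly negative real part; moreover p − q·w ≠ 0 and s − t·w ≠ 0, so this polynomial has degree exactly d. -/

import Mathlib

set_option maxHeartbeats 1000000 in
lemma real_loc (a b c e x y : ℝ)
    (hK : |a*e + b*c| < a*b + c*e)
    (h : (b + a*x)^2 + (a*y)^2 = (e + c*x)^2 + (c*y)^2) : x < 0 := by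
  have hK0 : 0 < a*b + c*e := lt_of_le_of_lt (abs_nonneg _) hK
  have hKL : (a*e + b*c)^2 < (a*b + c*e)^2 := by
    have h' := abs_lt.mp hK
    nlinarith [h'.1, h'.2]
  have idP : (a*b + c*e)^2 - (a*e + b*c)^2 = (a^2-c^2)*(b^2-e^2) := by ring
  have hPb : 0 < (a^2-c^2)*(b^2-e^2) := by rw [← idP]; linarith
  have hPne : a^2 - c^2 ≠ 0 := by
    intro h0; rw [h0] at hPb; simp at hPb
  have key : ((a^2-c^2)*x + (a*b-c*e))^2 + (a^2-c^2)^2*y^2 = (a*e-b*c)^2 := by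
    linear_combination (a^2-c^2) * h
  have idQ : (a*b-c*e)^2 = ((a*b+c*e)^2 - (a*e+b*c)^2) + (a*e-b*c)^2 := by ring
  have hQD : (a*e-b*c)^2 < (a*b-c*e)^2 := by linarith
  have hy2 : (0:ℝ) ≤ (a^2-c^2)^2*y^2 := by positivity
  have h1 : ((a^2-c^2)*x + (a*b-c*e))^2 < (a*b-c*e)^2 := by linarith
  by_contra hx
  push_neg at hx
  rcases lt_or_gt_of_ne hPne with hP | hP
  · have hbe : b^2 - e^2 < 0 := by nlinarith
    have he2 : 0 < e^2 := by nlinarith [sq_nonneg b]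
    have h3 : a^2*b^2 ≤ a^2*e^2 := by nlinarith [sq_nonneg a]
    have h4 : a^2*e^2 < c^2*e^2 := by nlinarith
    have h5 : (a*b)^2 < (c*e)^2 := by nlinarith
    have hQ : a*b - c*e < 0 := by
      by_contra hq; push_neg at hq
      nlinarith [mul_nonneg hq (le_of_lt hK0)]
    have hPx : (a^2-c^2)*x ≤ 0 := mul_nonpos_of_nonpos_of_nonneg (le_of_lt hP) hx
    nlinarith [mul_nonneg (by linarith : (0:ℝ) ≤ (a*b-c*e) - ((a^2-c^2)*x + (a*b-c*e)))
      (by linarith : (0:ℝ) ≤ -(((a^2-c^2)*x + (a*b-c*e)) + (a*b-c*e)))]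
  · have hbe : 0 < b^2 - e^2 := by nlinarith
    have hb2 : 0 < b^2 := by nlinarith [sq_nonneg e]
    have h3 : c^2*e^2 ≤ c^2*b^2 := by nlinarith [sq_nonneg c]
    have h4 : c^2*b^2 < a^2*b^2 := by nlinarith
    have h5 : (c*e)^2 < (a*b)^2 := by nlinarith
    have hQ : 0 < a*b - c*e := by
      by_contra hq; push_neg at hq
      nlinarith [mul_nonneg (by linarith : (0:ℝ) ≤ c*e - a*b) (le_of_lt hK0)]
    have hPx : 0 ≤ (a^2-c^2)*x := mul_nonneg (le_of_lt hP) hx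
    nlinarith [mul_nonneg (by linarith : (0:ℝ) ≤ ((a^2-c^2)*x + (a*b-c*e)) - (a*b-c*e))
      (by linarith : (0:ℝ) ≤ (((a^2-c^2)*x + (a*b-c*e)) + (a*b-c*e)))]

lemma abs_sq_expand (a b : ℝ) (z : ℂ) :
    ‖(b:ℂ) + (a:ℂ)*z‖ ^ 2 = (b + a*z.re)^2 + (a*z.im)^2 := by
  rw [Complex.sq_norm, Complex.normSq_apply]
  simp [Complex.add_re, Complex.add_im, Complex.mul_re, Complex.mul_im]
  ring

lemma zero_loc (d : ℕ) (hd : 1 ≤ d) (a b c e r : ℝ) (hr : r = 1 ∨ r = -1)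
    (hK : |a*e + b*c| < a*b + c*e) :
    ∀ z : ℂ, ((b:ℂ) + (a:ℂ) * z) ^ d + (r:ℂ) * ((e:ℂ) + (c:ℂ) * z) ^ d = 0 → z.re < 0 := by
  intro z hz
  have hrabs : ‖(r:ℂ)‖ = 1 := by
    rcases hr with h | h <;> simp [h]
  have h1 : ((b:ℂ) + a*z)^d = -((r:ℂ) * ((e:ℂ)+c*z)^d) := by
    linear_combination hz
  have h2 : ‖(b:ℂ)+a*z‖ ^ d = ‖(e:ℂ)+c*z‖ ^ d := by
    have := congrArg (‖·‖) h1
    simp only [norm_pow, norm_mul, norm_neg, hrabs, one_mul] at this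
    exact this
  have habs : ‖(b:ℂ)+a*z‖ = ‖(e:ℂ)+c*z‖ := by
    have hmono := pow_left_strictMonoOn₀ (M₀ := ℝ) (by omega : d ≠ 0)
    exact hmono.injOn (Set.mem_Ici.mpr (norm_nonneg _))
      (Set.mem_Ici.mpr (norm_nonneg _)) h2
  have hsq : (b + a*z.re)^2 + (a*z.im)^2 = (e + c*z.re)^2 + (c*z.im)^2 := by
    rw [← abs_sq_expand, ← abs_sq_expand, habs]
  exact real_loc a b c e z.re z.im hK hsq



/-- Facts about the chosen root of `B(1-w²)+2Cw = 0`. -/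
lemma root_facts (B C ρ δ w : ℝ) (hB : B ≠ 0) (hρ : 0 < ρ) (hρ2 : ρ^2 = B^2 + C^2)
    (hδ2 : δ^2 = 1) (hw : B*w = C - δ*ρ) :
    B*(1-w^2) + 2*C*w = 0 ∧ 0 < δ*(C*(1-w^2) - 2*B*w) := by
  have hB2 : 0 < B^2 := by nlinarith [mul_self_pos.mpr hB]
  have h9 : (B*(1-w^2) + 2*C*w)*B^2 = 0 := by
    linear_combination (-B*(B*w + C - δ*ρ) + 2*C*B) * hw + (-B) * hρ2 + (-B*ρ^2) * hδ2
  have hL0 : B*(1-w^2) + 2*C*w = 0 := by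
    rcases mul_eq_zero.mp h9 with h | h
    · exact h
    · exact absurd h (ne_of_gt hB2)
  have h10 : (C*(1-w^2) - 2*B*w)*B^2 = -2*ρ^2*(C - δ*ρ) := by
    linear_combination (-C*(B*w + C - δ*ρ) - 2*B^2) * hw + (C - 2*δ*ρ) * hρ2 + (-C*ρ^2) * hδ2
  have hδC : δ*C < ρ := by
    by_contra h
    push_neg at h
    nlinarith [hδ2, hB2]
  have h11 : δ*(C*(1-w^2) - 2*B*w)*B^2 = -2*ρ^2*(δ*C - ρ) := by
    linear_combination δ * h10 + 2*ρ^3 * hδ2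
  have h12 : 0 < -2*ρ^2*(δ*C - ρ) := by nlinarith [hρ, hδC]
  constructor
  · exact hL0
  · nlinarith [h11, h12, hB2]

/-- Arithmetic for the large-`w` case. -/
lemma bigw (A E2 C2 w : ℝ) (hA : 0 < A)
    (hw1 : (1 + |E2| + 2*|C2|)/A + (1 + |E2| + 2*|C2|) + 1 < w) :
    |2*C2*w| < A*(w^2 - 1) + E2*w := by
  have hX : (1:ℝ) ≤ 1 + |E2| + 2*|C2| := by linarith [abs_nonneg E2, abs_nonneg C2]
  have hX0 : (0:ℝ) < 1 + |E2| + 2*|C2| := by linarith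
  have hdiv : 0 < (1 + |E2| + 2*|C2|)/A := div_pos hX0 hA
  have hw0 : 1 < w := by linarith
  have h' : 1 + |E2| + 2*|C2| < (w-1)*A := (div_lt_iff₀ hA).mp (by linarith)
  have hwX : 1 + |E2| + 2*|C2| + 1 < w := by linarith
  rw [abs_lt]
  constructor <;>
    nlinarith [le_abs_self E2, neg_abs_le E2, le_abs_self C2, neg_abs_le C2,
      mul_pos (show (0:ℝ) < (w-1)*A - (1 + |E2| + 2*|C2|) by linarith)
        (show (0:ℝ) < w - 1 by linarith),
      mul_nonneg (show (0:ℝ) ≤ |E2| + E2 by linarith [neg_abs_le E2])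
        (show (0:ℝ) ≤ w - 1 by linarith),
      mul_nonneg (show (0:ℝ) ≤ |E2| - E2 by linarith [le_abs_self E2])
        (show (0:ℝ) ≤ w - 1 by linarith),
      mul_nonneg (show (0:ℝ) ≤ 2*|C2| + 2*C2 by linarith [neg_abs_le C2])
        (show (0:ℝ) ≤ w - 1 by linarith),
      mul_nonneg (show (0:ℝ) ≤ 2*|C2| - 2*C2 by linarith [le_abs_self C2])
        (show (0:ℝ) ≤ w - 1 by linarith)]

/-- If the transformed polynomial localizes with `L = 0 < K`, the leading data is nonzero. -/
lemma nondeg (p q s t w : ℝ) (h1 : p * t ≠ q * s)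
    (hL : (p-q*w)*(t+s*w)+(q+p*w)*(s-t*w) = 0)
    (hK : 0 < (p-q*w)*(q+p*w)+(s-t*w)*(t+s*w)) :
    p - q*w ≠ 0 ∧ s - t*w ≠ 0 := by
  have h1w : (0:ℝ) < 1 + w^2 := by positivity
  constructor
  · intro ha0
    have h4 : (p-q*w)*(q+p*w) = 0 := by rw [ha0]; ring
    have hce : 0 < (s-t*w)*(t+s*w) := by linarith
    have hc0 : s-t*w ≠ 0 := by intro h; rw [h, zero_mul] at hce; exact lt_irrefl 0 hce
    have h5 : (q+p*w)*(s-t*w) = 0 := by linear_combination hL - (t+s*w)*ha0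
    have hb0 : q + p*w = 0 := by
      rcases mul_eq_zero.mp h5 with h | h
      · exact h
      · exact absurd h hc0
    have hp : p = 0 := by
      have hpe : p*(1+w^2) = 0 := by linear_combination ha0 + w*hb0
      rcases mul_eq_zero.mp hpe with h | h
      · exact h
      · exact absurd h (ne_of_gt h1w)
    have hq : q = 0 := by
      have hqe : q*(1+w^2) = 0 := by linear_combination hb0 - w*ha0
      rcases mul_eq_zero.mp hqe with h | h
      · exact h
      · exact absurd h (ne_of_gt h1w)
    exact h1 (by rw [hp, hq]; ring)
  · intro hc0
    have h4 : (s-t*w)*(t+s*w) = 0 := by rw [hc0]; ring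
    have hab : 0 < (p-q*w)*(q+p*w) := by linarith
    have ha0 : p-q*w ≠ 0 := by intro h; rw [h, zero_mul] at hab; exact lt_irrefl 0 hab
    have h5 : (p-q*w)*(t+s*w) = 0 := by linear_combination hL - (q+p*w)*hc0
    have he0 : t + s*w = 0 := by
      rcases mul_eq_zero.mp h5 with h | h
      · exact absurd h ha0
      · exact h
    have hs : s = 0 := by
      have hse : s*(1+w^2) = 0 := by linear_combination hc0 + w*he0
      rcases mul_eq_zero.mp hse with h | h
      · exact h
      · exact absurd h (ne_of_gt h1w)
    have ht : t = 0 := by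
      have hte : t*(1+w^2) = 0 := by linear_combination he0 - w*hc0
      rcases mul_eq_zero.mp hte with h | h
      · exact h
      · exact absurd h (ne_of_gt h1w)
    exact h1 (by rw [hs, ht]; ring)

lemma exists_good_w (p q s t : ℝ) (h1 : p * t ≠ q * s)
    (h2 : p ^ 2 + q ^ 2 ≠ s ^ 2 + t ^ 2) :
    ∃ w : ℝ, |(p-q*w)*(t+s*w) + (q+p*w)*(s-t*w)| < (p-q*w)*(q+p*w) + (s-t*w)*(t+s*w)
      ∧ p - q*w ≠ 0 ∧ s - t*w ≠ 0 := by
  have hqs : q*s - p*t ≠ 0 := sub_ne_zero.mpr (fun h => h1 h.symm)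
  have hI : (p^2+q^2-s^2-t^2)*(q*s-p*t) ≠ 0 :=
    mul_ne_zero (fun h => h2 (by linarith)) hqs
  have hP2 : 0 < p^2+q^2 := by
    rcases eq_or_ne p 0 with hp | hp
    · rcases eq_or_ne q 0 with hq | hq
      · exact absurd (by rw [hp, hq]; ring) h1
      · nlinarith [mul_self_pos.mpr hq, sq_nonneg p]
    · nlinarith [mul_self_pos.mpr hp, sq_nonneg q]
  have hS2 : 0 < s^2+t^2 := by
    rcases eq_or_ne s 0 with hs | hs
    · rcases eq_or_ne t 0 with ht | ht
      · exact absurd (by rw [hs, ht]; ring) h1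
      · nlinarith [mul_self_pos.mpr ht, sq_nonneg s]
    · nlinarith [mul_self_pos.mpr hs, sq_nonneg t]
  rcases eq_or_ne (p*t+q*s) 0 with hB0 | hB
  · -- B = 0
    have hC : p*s - q*t ≠ 0 := by
      intro hC0
      have hid : (p*t+q*s)^2 + (p*s-q*t)^2 = (p^2+q^2)*(s^2+t^2) := by ring
      rw [hB0, hC0] at hid
      simp at hid
      nlinarith [mul_pos hP2 hS2]
    have hIC : (p^2+q^2-s^2-t^2)*(q*s-p*t) * (p*s-q*t) ≠ 0 := mul_ne_zero hI hC
    have hst : 2*(p*q+s*t)*((p^2+q^2)*(s^2+t^2)) =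
        ((p^2+q^2+s^2+t^2)*(p*s+q*t))*(p*t+q*s)
          + ((p^2+q^2-s^2-t^2)*(q*s-p*t))*(p*s-q*t) := by ring
    rw [hB0] at hst
    rcases lt_or_gt_of_ne hIC with hneg | hpos
    · -- large w
      have hpq : p*q + s*t < 0 := by nlinarith [mul_pos hP2 hS2]
      have hA0 : 0 < -(p*q+s*t) := by linarith
      set X : ℝ := 1 + |p^2-q^2+s^2-t^2| + 2*|p*s-q*t| with hXdef
      set w : ℝ := max (X/(-(p*q+s*t)) + X + 1) (max (p/q) (s/t)) + 1 with hwdef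
      have hm1 : X/(-(p*q+s*t)) + X + 1 < w := by
        have := le_max_left (X/(-(p*q+s*t)) + X + 1) (max (p/q) (s/t))
        linarith
      have hmq : p/q < w := by
        have h3 := le_max_left (p/q) (s/t)
        have h4 := le_max_right (X/(-(p*q+s*t)) + X + 1) (max (p/q) (s/t))
        linarith
      have hmt : s/t < w := by
        have h3 := le_max_right (p/q) (s/t)
        have h4 := le_max_right (X/(-(p*q+s*t)) + X + 1) (max (p/q) (s/t))
        linarith
      have ha : p - q*w ≠ 0 := by
        rcases eq_or_ne q 0 with hq | hq
        · rw [hq, zero_mul, sub_zero]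
          intro hp
          exact h1 (by rw [hp, hq]; ring)
        · intro h0
          have hpq' : p/q = w := by rw [div_eq_iff hq]; linear_combination h0
          linarith
      have hc : s - t*w ≠ 0 := by
        rcases eq_or_ne t 0 with ht | ht
        · rw [ht, zero_mul, sub_zero]
          intro hs
          exact h1 (by rw [hs, ht]; ring)
        · intro h0
          have hst' : s/t = w := by rw [div_eq_iff ht]; linear_combination h0
          linarith
      refine ⟨w, ?_, ha, hc⟩
      have hLval : (p-q*w)*(t+s*w)+(q+p*w)*(s-t*w) = 2*(p*s-q*t)*w := by
        linear_combination (1-w^2)*hB0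
      have hKval : (p-q*w)*(q+p*w)+(s-t*w)*(t+s*w)
          = (-(p*q+s*t))*(w^2-1) + (p^2-q^2+s^2-t^2)*w := by ring
      rw [hLval, hKval]
      exact bigw _ _ _ w hA0 (by rw [hXdef] at hm1; exact hm1)
    · -- w = 0
      have hKpos : 0 < p*q + s*t := by nlinarith [mul_pos hP2 hS2]
      have hL0' : (p-q*0)*(t+s*0)+(q+p*0)*(s-t*0) = 0 := by linear_combination hB0
      have hK0' : 0 < (p-q*0)*(q+p*0)+(s-t*0)*(t+s*0) := by
        have hkk : (p-q*0)*(q+p*0)+(s-t*0)*(t+s*0) = p*q+s*t := by ring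
        rw [hkk]; exact hKpos
      obtain ⟨ha, hc⟩ := nondeg p q s t 0 h1 hL0' hK0'
      exact ⟨0, by rw [hL0']; simpa using hK0', ha, hc⟩
  · -- B ≠ 0 : take the root of L
    have hBC : 0 < (p*t+q*s)^2 + (p*s-q*t)^2 := by
      nlinarith [mul_self_pos.mpr hB, sq_nonneg (p*s-q*t)]
    set ρ : ℝ := Real.sqrt ((p*t+q*s)^2 + (p*s-q*t)^2) with hρdef
    have hρ2 : ρ^2 = (p*t+q*s)^2 + (p*s-q*t)^2 := Real.sq_sqrt hBC.le
    have hρpos : 0 < ρ := Real.sqrt_pos.mpr hBC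
    set δ : ℝ := if 0 < (p^2+q^2-s^2-t^2)*(q*s-p*t) then 1 else -1 with hδdef
    have hδ2 : δ^2 = 1 := by rw [hδdef]; split_ifs <;> norm_num
    have hδI : 0 < δ * ((p^2+q^2-s^2-t^2)*(q*s-p*t)) := by
      rw [hδdef]; split_ifs with h
      · simpa using h
      · have h' := lt_of_le_of_ne (not_lt.mp h) hI
        nlinarith [h']
    set w : ℝ := ((p*s-q*t) - δ*ρ)/(p*t+q*s) with hwdef
    have hw : (p*t+q*s)*w = (p*s-q*t) - δ*ρ := by
      rw [hwdef]; field_simp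
    obtain ⟨hL0, hδM⟩ := root_facts (p*t+q*s) (p*s-q*t) ρ δ w hB hρpos hρ2 hδ2 hw
    have hL0' : (p-q*w)*(t+s*w)+(q+p*w)*(s-t*w) = 0 := by linear_combination hL0
    have hIM : 0 < ((p^2+q^2-s^2-t^2)*(q*s-p*t)) * ((p*s-q*t)*(1-w^2) - 2*(p*t+q*s)*w) := by
      have hswap : ((p^2+q^2-s^2-t^2)*(q*s-p*t)) * ((p*s-q*t)*(1-w^2) - 2*(p*t+q*s)*w)
          = (δ*((p^2+q^2-s^2-t^2)*(q*s-p*t)))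
            * (δ*((p*s-q*t)*(1-w^2) - 2*(p*t+q*s)*w)) := by
        linear_combination
          (-(((p^2+q^2-s^2-t^2)*(q*s-p*t))*((p*s-q*t)*(1-w^2) - 2*(p*t+q*s)*w))) * hδ2
      rw [hswap]
      exact mul_pos hδI hδM
    have hstar : 2*((p-q*w)*(q+p*w)+(s-t*w)*(t+s*w))*((p^2+q^2)*(s^2+t^2))
        = ((p^2+q^2+s^2+t^2)*(p*s+q*t))*((p-q*w)*(t+s*w)+(q+p*w)*(s-t*w))
          + ((p^2+q^2-s^2-t^2)*(q*s-p*t))*((p*s-q*t)*(1-w^2) - 2*(p*t+q*s)*w) := by ring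
    rw [hL0'] at hstar
    have hK0' : 0 < (p-q*w)*(q+p*w)+(s-t*w)*(t+s*w) := by
      nlinarith [mul_pos hP2 hS2, hIM]
    obtain ⟨ha, hc⟩ := nondeg p q s t w h1 hL0' hK0'
    exact ⟨w, by rw [hL0']; simpa using hK0', ha, hc⟩


/-- Case `b² - 4ac > 0`: for a signature `(p,q)^{⊗d} + r (s,t)^{⊗d}` with `pt ≠ qs`,
`p² + q² ≠ s² + t²` and `q² ≠ t²`, there is an orthogonal-type parameter `w` such that all
zeros of the transformed local polynomial lie in the open left half-plane, and the
transformed polynomial has degree exactly `d`. -/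
theorem exists_rotation_stable_distinct_roots (d : ℕ) (hd : 1 ≤ d) (p q s t : ℝ)
    (h1 : p * t ≠ q * s) (h2 : p ^ 2 + q ^ 2 ≠ s ^ 2 + t ^ 2) (h3 : q ^ 2 ≠ t ^ 2)
    (r : ℝ) (hr : r = 1 ∨ r = -1) :
    ∃ w : ℝ,
      (∀ z : ℂ,
        ((q : ℂ) + (p : ℂ) * (w : ℂ) + ((p : ℂ) - (q : ℂ) * (w : ℂ)) * z) ^ d +
          (r : ℂ) * ((t : ℂ) + (s : ℂ) * (w : ℂ) + ((s : ℂ) - (t : ℂ) * (w : ℂ)) * z) ^ d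
            = 0 → z.re < 0) ∧
      p - q * w ≠ 0 ∧ s - t * w ≠ 0 := by
  obtain ⟨w, hK, ha, hc⟩ := exists_good_w p q s t h1 h2
  refine ⟨w, ?_, ha, hc⟩
  intro z hz
  refine zero_loc d hd (p-q*w) (q+p*w) (s-t*w) (t+s*w) r hr hK z ?_
  have e1 : ((q+p*w : ℝ) : ℂ) + ((p-q*w : ℝ) : ℂ)*z
      = (q : ℂ) + (p : ℂ) * (w : ℂ) + ((p : ℂ) - (q : ℂ) * (w : ℂ)) * z := by
    push_cast; ring
  have e2 : ((t+s*w : ℝ) : ℂ) + ((s-t*w : ℝ) : ℂ)*z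
      = (t : ℂ) + (s : ℂ) * (w : ℂ) + ((s : ℂ) - (t : ℂ) * (w : ℂ)) * z := by
    push_cast; ring
  rw [e1, e2]
  exact hz
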